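/- Let d ∈ ℕ, 0 ≤ ω ≤ 1, and for each j let 2 ≤ q_j < ∞ and define p̃_j by 1/p̃_j = (1−ω)/q_j + ω/2. Let p̃_j' and q_j' be the conjugate exponents. Then for all x ∈ ℝ^{k₁⋯k_d}, ‖x‖_{l_{p̃₁',…,p̃_d'}^{k₁,…,k_d}} ≤ ‖x‖_{l_{q₁',…,q_d'}^{k₁,…,k_d}}^{1−ω} · ‖x‖_{l_{2,…,2}^{k₁,…,k_d}}^{ω}. -/

import Mathlib

open scoped ENNReal NNReal BigOperators

/-- The `ℓ_p` norm on `Fin n → ℝ`, with `p = ∞` giving the max norm. -/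
noncomputable def lpN (p : ℝ≥0∞) {n : ℕ} (x : Fin n → ℝ) : ℝ :=
  if p = ∞ then ((Finset.univ.sup fun i => ‖x i‖₊ : ℝ≥0) : ℝ)
  else (∑ i, |x i| ^ p.toReal) ^ (1 / p.toReal)

/-- The mixed norm `l_{p₁,…,p_d}^{k₁,…,k_d}`, defined recursively: the `ℓ_{p_d}` norm
(over the last index) of the mixed norms of the slices. -/
noncomputable def mixedNorm : {d : ℕ} → (k : Fin d → ℕ) → (p : Fin d → ℝ≥0∞) →
    ((∀ i, Fin (k i)) → ℝ) → ℝ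
  | 0, _, _, x => |x (fun i => i.elim0)|
  | (_+1), k, p, x => lpN (p (Fin.last _)) fun j =>
      mixedNorm (fun i => k i.castSucc) (fun i => p i.castSucc)
        (fun v => x (Fin.snoc v j))

lemma lpN_nonneg (p : ℝ≥0∞) {n : ℕ} (x : Fin n → ℝ) : 0 ≤ lpN p x := by
  unfold lpN; split
  · exact NNReal.coe_nonneg _
  · positivity

lemma mixedNorm_nonneg : ∀ {d : ℕ} (k : Fin d → ℕ) (p : Fin d → ℝ≥0∞)
    (x : (∀ i, Fin (k i)) → ℝ), 0 ≤ mixedNorm k p x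
  | 0, _, _, x => abs_nonneg _
  | (_+1), k, p, x => lpN_nonneg _ _

lemma lpN_eq {p : ℝ≥0∞} (hp : p ≠ ∞) {n : ℕ} (x : Fin n → ℝ) :
    lpN p x = (∑ i, |x i| ^ p.toReal) ^ (1 / p.toReal) := by
  unfold lpN; rw [if_neg hp]

/-- Interpolation of `ℓ_p` sums with pointwise domination. -/
lemma sum_interp {n : ℕ} {ω r a b : ℝ} (hω0 : 0 < ω) (hω1 : ω < 1)
    (hr : 0 < r) (ha : 0 < a) (hb : 0 < b) (hrel : r⁻¹ = (1 - ω) / a + ω / b)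
    (f g h : Fin n → ℝ) (hf : ∀ i, 0 ≤ f i) (hg : ∀ i, 0 ≤ g i) (hh : ∀ i, 0 ≤ h i)
    (hfgh : ∀ i, f i ≤ g i ^ (1 - ω) * h i ^ ω) :
    (∑ i, f i ^ r) ^ (1 / r) ≤
      ((∑ i, g i ^ a) ^ (1 / a)) ^ (1 - ω) * ((∑ i, h i ^ b) ^ (1 / b)) ^ ω := by
  have hω1' : 0 < 1 - ω := by linarith
  set s := a / ((1 - ω) * r) with hs
  set t := b / (ω * r) with ht
  have hra : (1 - ω) * r < a := by
    have h1 : (1 - ω) / a < r⁻¹ := by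
      rw [hrel]; have : 0 < ω / b := div_pos hω0 hb; linarith
    have := (div_lt_div_iff₀ ha hr).mp (by rw [← one_div] at h1; exact h1)
    linarith
  have hrb : ω * r < b := by
    have h1 : ω / b < r⁻¹ := by
      rw [hrel]; have : 0 < (1 - ω) / a := div_pos hω1' ha; linarith
    have := (div_lt_div_iff₀ hb hr).mp (by rw [← one_div] at h1; exact h1)
    linarith
  have hs1 : 1 < s := (one_lt_div (by positivity)).mpr hra
  have hconj : Real.HolderConjugate s t := by
    refine Real.holderConjugate_iff.mpr ⟨?_, ?_⟩
    · exact hs1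
    · rw [hs, ht]
      field_simp
      have : r ≠ 0 := hr.ne'
      have h2 : ((1 - ω) / a + ω / b) * r = 1 := by
        rw [← hrel]; field_simp
      field_simp at h2
      ring_nf
      ring_nf at h2
      linarith [h2]
  have key1 : ∑ i, f i ^ r ≤ ∑ i, g i ^ ((1 - ω) * r) * h i ^ (ω * r) := by
    refine Finset.sum_le_sum fun i _ => ?_
    calc f i ^ r ≤ (g i ^ (1 - ω) * h i ^ ω) ^ r :=
          Real.rpow_le_rpow (hf i) (hfgh i) hr.le
      _ = _ := by
          rw [Real.mul_rpow (Real.rpow_nonneg (hg i) _) (Real.rpow_nonneg (hh i) _),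
            ← Real.rpow_mul (hg i), ← Real.rpow_mul (hh i)]
  have key2 : ∑ i, g i ^ ((1 - ω) * r) * h i ^ (ω * r) ≤
      (∑ i, g i ^ a) ^ (1 / s) * (∑ i, h i ^ b) ^ (1 / t) := by
    have := Real.inner_le_Lp_mul_Lq_of_nonneg (s := Finset.univ) hconj
      (f := fun i => g i ^ ((1 - ω) * r)) (g := fun i => h i ^ (ω * r))
      (fun i _ => Real.rpow_nonneg (hg i) _) (fun i _ => Real.rpow_nonneg (hh i) _)
    convert this using 3
    · refine Finset.sum_congr rfl fun i _ => ?_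
      rw [← Real.rpow_mul (hg i)]
      congr 1
      rw [hs]; field_simp
    · refine Finset.sum_congr rfl fun i _ => ?_
      rw [← Real.rpow_mul (hh i)]
      congr 1
      rw [ht]; field_simp
  have hA0 : 0 ≤ ∑ i, g i ^ a := Finset.sum_nonneg fun i _ => Real.rpow_nonneg (hg i) _
  have hB0 : 0 ≤ ∑ i, h i ^ b := Finset.sum_nonneg fun i _ => Real.rpow_nonneg (hh i) _
  calc (∑ i, f i ^ r) ^ (1 / r)
      ≤ ((∑ i, g i ^ a) ^ (1 / s) * (∑ i, h i ^ b) ^ (1 / t)) ^ (1 / r) := by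
        apply Real.rpow_le_rpow (Finset.sum_nonneg fun i _ => Real.rpow_nonneg (hf i) _)
          (key1.trans key2) (by positivity)
    _ = ((∑ i, g i ^ a) ^ (1 / a)) ^ (1 - ω) * ((∑ i, h i ^ b) ^ (1 / b)) ^ ω := by
        rw [Real.mul_rpow (Real.rpow_nonneg hA0 _) (Real.rpow_nonneg hB0 _),
          ← Real.rpow_mul hA0, ← Real.rpow_mul hB0,
          ← Real.rpow_mul hA0, ← Real.rpow_mul hB0]
        congr 1
        · congr 1; rw [hs]; field_simp
        · congr 1; rw [ht]; field_simp

lemma mixed_interp : ∀ {d : ℕ} (k : Fin d → ℕ) {ω : ℝ}, 0 < ω → ω < 1 →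
    ∀ (r a : Fin d → ℝ), (∀ j, 0 < r j) → (∀ j, 0 < a j) →
    (∀ j, (r j)⁻¹ = (1 - ω) / a j + ω / 2) →
    ∀ x : (∀ i, Fin (k i)) → ℝ,
      mixedNorm k (fun j => ENNReal.ofReal (r j)) x ≤
        mixedNorm k (fun j => ENNReal.ofReal (a j)) x ^ (1 - ω) *
          mixedNorm k (fun _ => (2 : ℝ≥0∞)) x ^ ω := by
  intro d
  induction d with
  | zero =>
    intro k ω hω0 hω1 r a hr ha hrel x
    show |x _| ≤ |x _| ^ (1 - ω) * |x _| ^ ω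
    rw [← Real.rpow_add' (abs_nonneg _) (by norm_num : 1 - ω + ω ≠ 0)]
    simp
  | succ n ih =>
    intro k ω hω0 hω1 r a hr ha hrel x
    show lpN (ENNReal.ofReal (r (Fin.last n))) _ ≤
      lpN (ENNReal.ofReal (a (Fin.last n))) _ ^ (1 - ω) * lpN 2 _ ^ ω
    set F := fun j => mixedNorm (fun i => k i.castSucc)
      (fun i => ENNReal.ofReal (r i.castSucc)) (fun v => x (Fin.snoc v j)) with hF
    set G := fun j => mixedNorm (fun i => k i.castSucc)
      (fun i => ENNReal.ofReal (a i.castSucc)) (fun v => x (Fin.snoc v j)) with hG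
    set H := fun j => mixedNorm (fun i => k i.castSucc)
      (fun _ => (2 : ℝ≥0∞)) (fun v => x (Fin.snoc v j)) with hH
    have hFn : ∀ j, 0 ≤ F j := fun j => mixedNorm_nonneg _ _ _
    have hGn : ∀ j, 0 ≤ G j := fun j => mixedNorm_nonneg _ _ _
    have hHn : ∀ j, 0 ≤ H j := fun j => mixedNorm_nonneg _ _ _
    have hIH : ∀ j, F j ≤ G j ^ (1 - ω) * H j ^ ω := fun j =>
      ih _ hω0 hω1 (fun i => r i.castSucc) (fun i => a i.castSucc)
        (fun i => hr _) (fun i => ha _) (fun i => hrel _) _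
    rw [lpN_eq ENNReal.ofReal_ne_top, lpN_eq ENNReal.ofReal_ne_top,
      lpN_eq (by norm_num : (2 : ℝ≥0∞) ≠ ∞),
      ENNReal.toReal_ofReal (hr _).le, ENNReal.toReal_ofReal (ha _).le]
    have h2 : (2 : ℝ≥0∞).toReal = (2 : ℝ) := by norm_num
    rw [h2]
    simp only [abs_of_nonneg (hFn _), abs_of_nonneg (hGn _), abs_of_nonneg (hHn _)]
    exact sum_interp hω0 hω1 (hr _) (ha _) (by norm_num) (hrel _) F G H hFn hGn hHn hIH

theorem stmt_3 {d : ℕ} (k : Fin d → ℕ) (ω : ℝ) (hω0 : 0 ≤ ω) (hω1 : ω ≤ 1)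
    (q : Fin d → ℝ) (hq : ∀ j, 2 ≤ q j)
    (ptilde : Fin d → ℝ) (hp : ∀ j, (ptilde j)⁻¹ = (1 - ω) / q j + ω / 2) :
    ∀ x : (∀ i, Fin (k i)) → ℝ,
      mixedNorm k (fun j => ENNReal.ofReal (ptilde j / (ptilde j - 1))) x ≤
        mixedNorm k (fun j => ENNReal.ofReal (q j / (q j - 1))) x ^ (1 - ω) *
          mixedNorm k (fun _ => (2 : ℝ≥0∞)) x ^ ω := by
  intro x
  have hq0 : ∀ j, 0 < q j := fun j => lt_of_lt_of_le (by norm_num) (hq j)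
  rcases eq_or_lt_of_le hω0 with h0 | h0
  · -- ω = 0
    subst h0
    have hpq : ∀ j, ptilde j = q j := fun j => by
      refine inv_injective ?_
      have := hp j
      simp only [sub_zero, zero_div, add_zero, one_div] at this
      rw [this]
    have heq : (fun j => ENNReal.ofReal (ptilde j / (ptilde j - 1))) =
        (fun j => ENNReal.ofReal (q j / (q j - 1))) := by
      funext j; rw [hpq j]
    rw [heq]
    simp [Real.rpow_zero, Real.rpow_one]
  rcases eq_or_lt_of_le hω1 with h1 | h1
  · -- ω = 1
    subst h1
    have hpq : ∀ j, ptilde j = 2 := fun j => by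
      refine inv_injective ?_
      have := hp j
      simp only [sub_self, zero_div, zero_add] at this
      rw [this]; norm_num
    have heq : (fun j => ENNReal.ofReal (ptilde j / (ptilde j - 1))) =
        (fun _ => (2 : ℝ≥0∞)) := by
      funext j; rw [hpq j]; norm_num
    rw [heq]
    simp [Real.rpow_zero, Real.rpow_one]
  · -- 0 < ω < 1
    have hω1' : 0 < 1 - ω := by linarith
    have hpt_inv_pos : ∀ j, 0 < (ptilde j)⁻¹ := fun j => by
      rw [hp j]
      have : 0 ≤ (1 - ω) / q j := div_nonneg hω1'.le (hq0 j).le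
      linarith [div_pos h0 (by norm_num : (0:ℝ) < 2)]
    have hpt_pos : ∀ j, 0 < ptilde j := fun j => inv_pos.mp (hpt_inv_pos j)
    have hpt2 : ∀ j, 2 ≤ ptilde j := fun j => by
      have h1 : (ptilde j)⁻¹ ≤ (1 - ω) / 2 + ω / 2 := by
        rw [hp j]
        have : (1 - ω) / q j ≤ (1 - ω) / 2 := by
          apply div_le_div_of_nonneg_left hω1'.le (by norm_num) (hq j)
        linarith
      have h2 : (ptilde j)⁻¹ ≤ (2 : ℝ)⁻¹ := by
        rw [show ((2:ℝ))⁻¹ = (1-ω)/2 + ω/2 by ring]; exact h1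
      exact (inv_le_inv₀ (hpt_pos j) (by norm_num)).mp h2
    have hr_pos : ∀ j, 0 < ptilde j / (ptilde j - 1) := fun j =>
      div_pos (hpt_pos j) (by linarith [hpt2 j])
    have ha_pos : ∀ j, 0 < q j / (q j - 1) := fun j =>
      div_pos (hq0 j) (by linarith [hq j])
    have hrel : ∀ j, (ptilde j / (ptilde j - 1))⁻¹ =
        (1 - ω) / (q j / (q j - 1)) + ω / 2 := fun j => by
      have hP := hp j
      have hp0 : ptilde j ≠ 0 := (hpt_pos j).ne'
      have hq0' : q j ≠ 0 := (hq0 j).ne'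
      rw [inv_div, div_div_eq_mul_div]
      field_simp at hP ⊢
      ring_nf
      ring_nf at hP
      nlinarith [hP, sq_nonneg (q j)]
    exact mixed_interp k h0 h1 _ _ hr_pos ha_pos hrel x
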